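/- Let M ∈ M_n(ℝ) be an expansive real matrix, D ⊂ ℝⁿ a finite set, and A ∈ M_n(ℝ) an invertible matrix. Let μ_{A,M,D} := (A⁻¹)_*(δ_D * μ_{M,D}) be the pushforward under x ↦ A⁻¹x of the convolution of the uniform measure on D with μ_{M,D}. Then: (a) μ_{M,D} is the pushforward of μ_{A,M,D} under the map x ↦ M⁻¹Ax; and (b) for any countable Λ ⊂ ℝⁿ, (μ_{M,D}, Λ) is a spectral pair if and only if (μ_{A,M,D}, A*M^{*−1}Λ) is a spectral pair (where * denotes matrix transpose). -/

import Mathlib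

open MeasureTheory Matrix Complex
open scoped ENNReal

noncomputable section

/-- The exponential function `x ↦ e^{2πi⟨l,x⟩}` on `Fin n → ℝ`. -/
def expChar {n : ℕ} (l x : Fin n → ℝ) : ℂ :=
  Complex.exp (2 * Real.pi * Complex.I * Complex.ofReal (∑ i, l i * x i))

/-- `Λ` is an orthogonal set of `μ`: the exponentials `e^{2πi⟨λ,·⟩}`, `λ ∈ Λ`,
form an orthonormal family in `L²(μ)`. -/
def IsOrthogonalSet {n : ℕ} (μ : Measure (Fin n → ℝ)) (Λ : Set (Fin n → ℝ)) : Prop :=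
  ∃ b : Λ → Lp ℂ 2 μ,
    (∀ l : Λ, (b l : (Fin n → ℝ) → ℂ) =ᵐ[μ] expChar (l : Fin n → ℝ)) ∧
    Orthonormal ℂ b

/-- `Λ` is a spectrum of `μ`: the exponentials `e^{2πi⟨λ,·⟩}`, `λ ∈ Λ`,
form an orthonormal basis (orthonormal and total) of `L²(μ)`. -/
def IsSpectrum {n : ℕ} (μ : Measure (Fin n → ℝ)) (Λ : Set (Fin n → ℝ)) : Prop :=
  ∃ b : Λ → Lp ℂ 2 μ,
    (∀ l : Λ, (b l : (Fin n → ℝ) → ℂ) =ᵐ[μ] expChar (l : Fin n → ℝ)) ∧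
    Orthonormal ℂ b ∧
    (Submodule.span ℂ (Set.range b)).topologicalClosure = ⊤

/-- `μ` is a spectral measure : some countable `Λ` is a spectrum of `μ`. -/
def IsSpectralMeasure {n : ℕ} (μ : Measure (Fin n → ℝ)) : Prop :=
  ∃ Λ : Set (Fin n → ℝ), Λ.Countable ∧ IsSpectrum μ Λ

/-- A real matrix is expansive if all of its (complex) eigenvalues have modulus `> 1`. -/
def Expansive {n : ℕ} (M : Matrix (Fin n) (Fin n) ℝ) : Prop :=
  ∀ z : ℂ, (M.map (Complex.ofReal)).charpoly.IsRoot z → 1 < ‖z‖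

/-- `μ` is the self-affine measure associated with `(M, D)`: a compactly supported
Borel probability measure satisfying `μ = (1/#D) ∑_{d ∈ D} μ ∘ φ_d⁻¹`,
where `φ_d x = M⁻¹(x + d)`. -/
def IsSelfAffineMeasure {n : ℕ} (M : Matrix (Fin n) (Fin n) ℝ) (D : Finset (Fin n → ℝ))
    (μ : Measure (Fin n → ℝ)) : Prop :=
  IsProbabilityMeasure μ ∧
  (∃ K : Set (Fin n → ℝ), IsCompact K ∧ μ Kᶜ = 0) ∧
  μ = (D.card : ℝ≥0∞)⁻¹ • ∑ d ∈ D, μ.map (fun x => M⁻¹.mulVec (x + d))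

/-- Coordinatewise cast of an integer vector to a real vector. -/
def intCast {n : ℕ} (v : Fin n → ℤ) : Fin n → ℝ := fun i => (v i : ℝ)

/-- The matrix `H = N^{-1/2} (e^{2πi⟨M⁻¹d, s⟩})_{d ∈ D, s ∈ S}`. -/
def hadamardH {n : ℕ} (M : Matrix (Fin n) (Fin n) ℤ) (D S : Finset (Fin n → ℤ)) :
    Matrix D S ℂ := fun d s =>
  (Real.sqrt (D.card) : ℂ)⁻¹ *
    Complex.exp (2 * Real.pi * Complex.I *
      Complex.ofReal (∑ i, ((M.map (Int.cast : ℤ → ℝ))⁻¹.mulVec (intCast d.1)) i * ((s.1 i : ℝ))))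

/-- `(M, D, S)` is a Hadamard triple: `#D = #S` and
`H = N^{-1/2}(e^{2πi⟨M⁻¹d,s⟩})` is unitary. -/
def IsHadamardTriple {n : ℕ} (M : Matrix (Fin n) (Fin n) ℤ) (D S : Finset (Fin n → ℤ)) :
    Prop :=
  D.card = S.card ∧ (hadamardH M D S)ᴴ * hadamardH M D S = 1

/-- `(M, D)` is admissible: there is `S ⊂ ℤⁿ` such that `(M, D, S)` is a Hadamard triple. -/
def IsAdmissible {n : ℕ} (M : Matrix (Fin n) (Fin n) ℤ) (D : Finset (Fin n → ℤ)) : Prop :=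
  ∃ S : Finset (Fin n → ℤ), IsHadamardTriple M D S

/-- The mask polynomial `m_D(x) = (1/#D) ∑_{d∈D} e^{2πi⟨d,x⟩}` of a finite set `D`. -/
def maskPoly {n : ℕ} (D : Finset (Fin n → ℝ)) (x : Fin n → ℝ) : ℂ :=
  (D.card : ℂ)⁻¹ * ∑ d ∈ D, Complex.exp (2 * Real.pi * Complex.I * Complex.ofReal (∑ i, d i * x i))

/-- The Fourier transform `μ̂(ξ) = ∫ e^{2πi⟨x,ξ⟩} dμ(x)`. -/
def fourierMeasure {n : ℕ} (μ : Measure (Fin n → ℝ)) (ξ : Fin n → ℝ) : ℂ :=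
  ∫ x, expChar ξ x ∂μ

section Aux

variable {n : ℕ}

lemma measurable_mulVec (N : Matrix (Fin n) (Fin n) ℝ) :
    Measurable fun x : Fin n → ℝ => N.mulVec x := by
  apply measurable_pi_lambda
  intro i
  simp only [Matrix.mulVec, dotProduct]
  exact Finset.measurable_sum Finset.univ fun j _ => by fun_prop

lemma smul_prod_meas {α β : Type*} [MeasurableSpace α] [MeasurableSpace β]
    (c : ℝ≥0∞) (ρ : Measure α) (μ : Measure β) [SFinite μ] :
    (c • ρ).prod μ = c • ρ.prod μ := by
  ext s hs
  rw [Measure.prod_apply hs, Measure.smul_apply, smul_eq_mul, Measure.prod_apply hs,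
    lintegral_smul_measure, smul_eq_mul]

lemma finsetSum_prod_meas {α β ι : Type*} [MeasurableSpace α] [MeasurableSpace β]
    (s : Finset ι) (m : ι → Measure α) (μ : Measure β) [SFinite μ] :
    (∑ d ∈ s, m d).prod μ = ∑ d ∈ s, (m d).prod μ := by
  ext t ht
  rw [Measure.prod_apply ht, Measure.finset_sum_apply, lintegral_finset_sum_measure]
  exact Finset.sum_congr rfl fun d _ => (Measure.prod_apply ht).symm

lemma map_finsetSum_meas {α β ι : Type*} [MeasurableSpace α] [MeasurableSpace β]
    (s : Finset ι) (m : ι → Measure α) {f : α → β} (hf : Measurable f) :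
    (∑ d ∈ s, m d).map f = ∑ d ∈ s, (m d).map f := by
  classical
  induction s using Finset.cons_induction with
  | empty => simp
  | cons a s ha ih => rw [Finset.sum_cons, Finset.sum_cons, Measure.map_add _ _ hf, ih]

lemma expansive_isUnit_det {M : Matrix (Fin n) (Fin n) ℝ} (hM : Expansive M) :
    IsUnit M.det := by
  rw [isUnit_iff_ne_zero]
  intro hdet
  have hdetC : (M.map Complex.ofReal).det = 0 := by
    have h := RingHom.map_det Complex.ofRealHom M
    simp only [RingHom.mapMatrix_apply] at h
    have : (M.map Complex.ofReal).det = Complex.ofRealHom M.det := by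
      rw [h]; rfl
    rw [this, hdet]; simp
  have hroot : (M.map Complex.ofReal).charpoly.IsRoot 0 := by
    have h := Matrix.det_eq_sign_charpoly_coeff (M.map Complex.ofReal)
    rw [hdetC] at h
    have hcoeff : (M.map Complex.ofReal).charpoly.coeff 0 = 0 := by
      rcases mul_eq_zero.mp h.symm with h' | h'
      · exact absurd h' (pow_ne_zero _ (by norm_num))
      · exact h'
    simpa [Polynomial.IsRoot, ← Polynomial.coeff_zero_eq_eval_zero] using hcoeff
  have h2 := hM 0 hroot
  simp only [norm_zero] at h2
  exact absurd h2 (by norm_num)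

/-- Transfer of spectra along a measure-preserving pair of mutually inverse maps. -/
lemma isSpectrum_transfer {ν₁ ν₂ : Measure (Fin n → ℝ)}
    (f g σ : (Fin n → ℝ) → (Fin n → ℝ))
    (hf : MeasurePreserving f ν₂ ν₁) (hg : MeasurePreserving g ν₁ ν₂)
    (hfg : ∀ x, f (g x) = x) (hgf : ∀ x, g (f x) = x)
    (hσ : Function.Injective σ)
    (hchar : ∀ l x, expChar l (f x) = expChar (σ l) x)
    (Λ : Set (Fin n → ℝ)) (h : IsSpectrum ν₁ Λ) : IsSpectrum ν₂ (σ '' Λ) := by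
  obtain ⟨b, hb1, hb2, hb3⟩ := h
  let Φ : Lp ℂ 2 ν₁ →ₗᵢ[ℂ] Lp ℂ 2 ν₂ := Lp.compMeasurePreservingₗᵢ (𝕜 := ℂ) f hf
  let Ψ : Lp ℂ 2 ν₂ →ₗᵢ[ℂ] Lp ℂ 2 ν₁ := Lp.compMeasurePreservingₗᵢ (𝕜 := ℂ) g hg
  have hΦcoe : ∀ u : Lp ℂ 2 ν₁, (Φ u : (Fin n → ℝ) → ℂ) =ᵐ[ν₂] (u : (Fin n → ℝ) → ℂ) ∘ f :=
    fun u => Lp.coeFn_compMeasurePreserving u hf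
  have hΨcoe : ∀ u : Lp ℂ 2 ν₂, (Ψ u : (Fin n → ℝ) → ℂ) =ᵐ[ν₁] (u : (Fin n → ℝ) → ℂ) ∘ g :=
    fun u => Lp.coeFn_compMeasurePreserving u hg
  have hΨΦ : ∀ u : Lp ℂ 2 ν₁, Ψ (Φ u) = u := by
    intro u
    apply Lp.ext
    refine (hΨcoe (Φ u)).trans ?_
    have h1 : ((Φ u : (Fin n → ℝ) → ℂ)) ∘ g =ᵐ[ν₁]
        (((u : (Fin n → ℝ) → ℂ)) ∘ f) ∘ g :=
      hg.quasiMeasurePreserving.ae_eq_comp (hΦcoe u)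
    refine h1.trans ?_
    have : (((u : (Fin n → ℝ) → ℂ)) ∘ f) ∘ g = (u : (Fin n → ℝ) → ℂ) := by
      funext x; simp [Function.comp, hfg x]
    rw [this]
  have hΦΨ : ∀ u : Lp ℂ 2 ν₂, Φ (Ψ u) = u := by
    intro u
    apply Lp.ext
    refine (hΦcoe (Ψ u)).trans ?_
    have h1 : ((Ψ u : (Fin n → ℝ) → ℂ)) ∘ f =ᵐ[ν₂]
        (((u : (Fin n → ℝ) → ℂ)) ∘ g) ∘ f :=
      hf.quasiMeasurePreserving.ae_eq_comp (hΨcoe u)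
    refine h1.trans ?_
    have : (((u : (Fin n → ℝ) → ℂ)) ∘ g) ∘ f = (u : (Fin n → ℝ) → ℂ) := by
      funext x; simp [Function.comp, hgf x]
    rw [this]
  let e : Lp ℂ 2 ν₁ ≃ₗᵢ[ℂ] Lp ℂ 2 ν₂ :=
    { toLinearEquiv := LinearEquiv.ofLinear Φ.toLinearMap Ψ.toLinearMap
        (LinearMap.ext hΦΨ) (LinearMap.ext hΨΦ)
      norm_map' := Φ.norm_map }
  have hecoe : ∀ u : Lp ℂ 2 ν₁, e u = Φ u := fun _ => rfl
  let ι : Λ ≃ (σ '' Λ) := Equiv.Set.image σ Λ hσ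
  have hιcoe : ∀ l : (σ '' Λ), σ ((ι.symm l : Λ) : Fin n → ℝ) = (l : Fin n → ℝ) := by
    intro l
    exact congrArg Subtype.val (ι.apply_symm_apply l)
  refine ⟨fun l => e (b (ι.symm l)), ?_, ?_, ?_⟩
  · intro l
    have h1 : (e (b (ι.symm l)) : (Fin n → ℝ) → ℂ) =ᵐ[ν₂]
        ((b (ι.symm l) : (Fin n → ℝ) → ℂ)) ∘ f := by
      rw [hecoe]; exact hΦcoe _
    have h2 : ((b (ι.symm l) : (Fin n → ℝ) → ℂ)) ∘ f =ᵐ[ν₂]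
        (expChar ((ι.symm l : Λ) : Fin n → ℝ)) ∘ f :=
      hf.quasiMeasurePreserving.ae_eq_comp (hb1 _)
    have h3 : (expChar ((ι.symm l : Λ) : Fin n → ℝ)) ∘ f = expChar (l : Fin n → ℝ) := by
      funext x
      rw [Function.comp_apply, hchar, hιcoe]
    exact h1.trans (h2.trans (by rw [h3]))
  · have h1 : Orthonormal ℂ (⇑e ∘ b) := hb2.comp_linearIsometryEquiv e
    exact h1.comp _ ι.symm.injective
  · have hrange : Set.range (fun l : (σ '' Λ) => e (b (ι.symm l))) = ⇑e '' Set.range b := by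
      rw [show (fun l : (σ '' Λ) => e (b (ι.symm l))) = ⇑e ∘ (b ∘ ⇑ι.symm) from rfl,
        Set.range_comp, ι.symm.surjective.range_comp]
    rw [hrange]
    have hcl : closure (SetLike.coe (Submodule.span ℂ (Set.range b))) = Set.univ := by
      have h1 := congrArg SetLike.coe hb3
      rwa [Submodule.topologicalClosure_coe, Submodule.top_coe] at h1
    apply SetLike.ext'
    rw [Submodule.topologicalClosure_coe, Submodule.top_coe]
    have himg : SetLike.coe (Submodule.span ℂ (⇑e '' Set.range b))
        = ⇑e '' SetLike.coe (Submodule.span ℂ (Set.range b)) := by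
      have h1 := Submodule.map_span (e.toLinearEquiv : Lp ℂ 2 ν₁ →ₗ[ℂ] Lp ℂ 2 ν₂)
        (Set.range b)
      have h2 : ⇑(e.toLinearEquiv : Lp ℂ 2 ν₁ →ₗ[ℂ] Lp ℂ 2 ν₂) = ⇑e := rfl
      rw [h2] at h1
      rw [← h1, Submodule.map_coe, h2]
    rw [himg]
    have h4 : closure (⇑e '' SetLike.coe (Submodule.span ℂ (Set.range b)))
        = ⇑e '' closure (SetLike.coe (Submodule.span ℂ (Set.range b))) :=
      (e.toHomeomorph.image_closure _).symm
    rw [h4, hcl, Set.image_univ]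
    exact e.surjective.range_eq

lemma expChar_mulVec (N : Matrix (Fin n) (Fin n) ℝ) (l x : Fin n → ℝ) :
    expChar l (N.mulVec x) = expChar (Nᵀ.mulVec l) x := by
  unfold expChar
  congr 2
  have h1 : ∑ i, l i * (N.mulVec x) i = l ⬝ᵥ N.mulVec x := rfl
  have h2 : ∑ i, (Nᵀ.mulVec l) i * x i = (Nᵀ.mulVec l) ⬝ᵥ x := rfl
  rw [h1, h2, Matrix.dotProduct_mulVec, Matrix.mulVec_transpose]

end Aux

theorem moran_measure_spectral_pair_transfer
    (n : ℕ) (M : Matrix (Fin n) (Fin n) ℝ) (hM : Expansive M)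
    (D : Finset (Fin n → ℝ))
    (A : Matrix (Fin n) (Fin n) ℝ) (hA : IsUnit A)
    (μ : Measure (Fin n → ℝ)) (hμ : IsSelfAffineMeasure M D μ)
    (μAMD : Measure (Fin n → ℝ))
    (hAMD : μAMD =
      (((((D.card : ℝ≥0∞)⁻¹ • ∑ d ∈ D, Measure.dirac d).prod μ).map
          (fun p => p.1 + p.2)).map (fun x => A⁻¹.mulVec x))) :
    μ = μAMD.map (fun x => M⁻¹.mulVec (A.mulVec x)) ∧
    ∀ Λ : Set (Fin n → ℝ), Λ.Countable →
      (IsSpectrum μ Λ ↔ IsSpectrum μAMD ((fun v => (Aᵀ * (Mᵀ)⁻¹).mulVec v) '' Λ)) := by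
  classical
  obtain ⟨hprob, -, hself⟩ := hμ
  haveI := hprob
  have hAdet : IsUnit A.det := (Matrix.isUnit_iff_isUnit_det A).mp hA
  have hMdet : IsUnit M.det := expansive_isUnit_det hM
  have hATdet : IsUnit Aᵀ.det := by rwa [Matrix.det_transpose]
  have hMTdet : IsUnit Mᵀ.det := by rwa [Matrix.det_transpose]
  set T : (Fin n → ℝ) → (Fin n → ℝ) := fun x => M⁻¹.mulVec (A.mulVec x) with hTdef
  set Tinv : (Fin n → ℝ) → (Fin n → ℝ) := fun x => A⁻¹.mulVec (M.mulVec x) with hTinvdef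
  have hTmeas : Measurable T := (measurable_mulVec M⁻¹).comp (measurable_mulVec A)
  have hTinvmeas : Measurable Tinv := (measurable_mulVec A⁻¹).comp (measurable_mulVec M)
  have haddmeas : Measurable fun p : (Fin n → ℝ) × (Fin n → ℝ) => p.1 + p.2 :=
    measurable_fst.add measurable_snd
  have hTTinv : ∀ x, T (Tinv x) = x := by
    intro x
    show M⁻¹.mulVec (A.mulVec (A⁻¹.mulVec (M.mulVec x))) = x
    simp only [Matrix.mulVec_mulVec]
    rw [← Matrix.mul_assoc A A⁻¹ M, Matrix.mul_nonsing_inv A hAdet, Matrix.one_mul,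
      Matrix.nonsing_inv_mul M hMdet, Matrix.one_mulVec]
  have hTinvT : ∀ x, Tinv (T x) = x := by
    intro x
    show A⁻¹.mulVec (M.mulVec (M⁻¹.mulVec (A.mulVec x))) = x
    simp only [Matrix.mulVec_mulVec]
    rw [← Matrix.mul_assoc M M⁻¹ A, Matrix.mul_nonsing_inv M hMdet, Matrix.one_mul,
      Matrix.nonsing_inv_mul A hAdet, Matrix.one_mulVec]
  have hpartA : μ = μAMD.map T := by
    have hmap1 : μAMD.map T =
        ((((D.card : ℝ≥0∞)⁻¹ • ∑ d ∈ D, Measure.dirac d).prod μ).map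
          (fun p => p.1 + p.2)).map (fun x => M⁻¹.mulVec x) := by
      rw [hAMD, Measure.map_map hTmeas (measurable_mulVec A⁻¹)]
      congr 1
      funext x
      show M⁻¹.mulVec (A.mulVec (A⁻¹.mulVec x)) = M⁻¹.mulVec x
      simp only [Matrix.mulVec_mulVec]
      rw [Matrix.mul_nonsing_inv A hAdet, Matrix.mul_one]
    have hF : Measurable ((fun x => M⁻¹.mulVec x) ∘
        (fun p : (Fin n → ℝ) × (Fin n → ℝ) => p.1 + p.2)) :=
      (measurable_mulVec M⁻¹).comp haddmeas
    rw [hmap1, Measure.map_map (measurable_mulVec M⁻¹) haddmeas,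
      smul_prod_meas, finsetSum_prod_meas, Measure.map_smul, map_finsetSum_meas D _ hF]
    conv_lhs => rw [hself]
    congr 1
    refine Finset.sum_congr rfl fun d _ => ?_
    rw [Measure.dirac_prod, Measure.map_map hF measurable_prodMk_left]
    congr 1
    funext x
    show M⁻¹.mulVec (x + d) = M⁻¹.mulVec (d + x)
    rw [add_comm]
  refine ⟨hpartA, ?_⟩
  intro Λ _
  set σ : (Fin n → ℝ) → (Fin n → ℝ) := fun v => (Aᵀ * (Mᵀ)⁻¹).mulVec v with hσdef
  set σ' : (Fin n → ℝ) → (Fin n → ℝ) := fun v => (Mᵀ * (Aᵀ)⁻¹).mulVec v with hσ'def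
  have hσunit : IsUnit (Aᵀ * (Mᵀ)⁻¹) :=
    ((Matrix.isUnit_iff_isUnit_det _).mpr hATdet).mul
      (Matrix.isUnit_nonsing_inv_iff.mpr ((Matrix.isUnit_iff_isUnit_det _).mpr hMTdet))
  have hσ'unit : IsUnit (Mᵀ * (Aᵀ)⁻¹) :=
    ((Matrix.isUnit_iff_isUnit_det _).mpr hMTdet).mul
      (Matrix.isUnit_nonsing_inv_iff.mpr ((Matrix.isUnit_iff_isUnit_det _).mpr hATdet))
  have hσinj : Function.Injective σ := Matrix.mulVec_injective_iff_isUnit.mpr hσunit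
  have hσ'inj : Function.Injective σ' := Matrix.mulVec_injective_iff_isUnit.mpr hσ'unit
  have hMP1 : MeasurePreserving T μAMD μ := ⟨hTmeas, hpartA.symm⟩
  have hMP2 : MeasurePreserving Tinv μ μAMD := by
    refine ⟨hTinvmeas, ?_⟩
    rw [hpartA, Measure.map_map hTinvmeas hTmeas]
    have : Tinv ∘ T = id := funext hTinvT
    rw [this, Measure.map_id]
  have hchar1 : ∀ l x, expChar l (T x) = expChar (σ l) x := by
    intro l x
    have h1 : T x = (M⁻¹ * A).mulVec x := by
      show M⁻¹.mulVec (A.mulVec x) = _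
      rw [Matrix.mulVec_mulVec]
    rw [h1, expChar_mulVec, hσdef]
    congr 2
    rw [Matrix.transpose_mul, Matrix.transpose_nonsing_inv]
  have hchar2 : ∀ l x, expChar l (Tinv x) = expChar (σ' l) x := by
    intro l x
    have h1 : Tinv x = (A⁻¹ * M).mulVec x := by
      show A⁻¹.mulVec (M.mulVec x) = _
      rw [Matrix.mulVec_mulVec]
    rw [h1, expChar_mulVec, hσ'def]
    congr 2
    rw [Matrix.transpose_mul, Matrix.transpose_nonsing_inv]
  have hσ'σ : ∀ v, σ' (σ v) = v := by
    intro v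
    show (Mᵀ * (Aᵀ)⁻¹).mulVec ((Aᵀ * (Mᵀ)⁻¹).mulVec v) = v
    rw [Matrix.mulVec_mulVec]
    have h1 : Mᵀ * (Aᵀ)⁻¹ * (Aᵀ * (Mᵀ)⁻¹) = 1 := by
      rw [Matrix.mul_assoc, ← Matrix.mul_assoc (Aᵀ)⁻¹, Matrix.nonsing_inv_mul _ hATdet,
        Matrix.one_mul, Matrix.mul_nonsing_inv _ hMTdet]
    rw [h1, Matrix.one_mulVec]
  constructor
  · intro h
    exact isSpectrum_transfer T Tinv σ hMP1 hMP2 hTTinv hTinvT hσinj hchar1 Λ h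
  · intro h
    have h2 := isSpectrum_transfer Tinv T σ' hMP2 hMP1 hTinvT hTTinv hσ'inj hchar2 _ h
    have h3 : σ' '' (σ '' Λ) = Λ := by
      rw [← Set.image_comp]
      have hid : σ' ∘ σ = id := funext hσ'σ
      rw [hid, Set.image_id]
    rwa [h3] at h2
end
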